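/- Let I, I′, I″ be bounded closed intervals in ℝ with I′ ⊆ I″, |I′| > 0, |I″| > 0, and suppose dist(I, I″) ≥ |I″|. Then J(I, I′) ≤ 4 · (|I′|/|I″|) · J(I, I″). -/

import Mathlib

/-- `J(I, I') = ∫_{I×I'} |x-y|^{-2}` for `I = [a,b]`, `I' = [c,d]`. -/
noncomputable def Jint (a b c d : ℝ) : ℝ := ∫ x in a..b, ∫ y in c..d, ((x - y) ^ 2)⁻¹

lemma inner_eval {c d x : ℝ} (h : ∀ y ∈ Set.uIcc c d, x - y ≠ 0) :
    ∫ y in c..d, ((x - y) ^ 2)⁻¹ = (x - d)⁻¹ - (x - c)⁻¹ := by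
  apply intervalIntegral.integral_eq_sub_of_hasDerivAt
  · intro y hy
    have h1 : HasDerivAt (fun y : ℝ => x - y) (-1) y := (hasDerivAt_id y).const_sub x
    exact (h1.inv (h y hy)).congr_deriv (by ring)
  · apply ContinuousOn.intervalIntegrable
    exact (((continuousOn_const.sub continuousOn_id).pow 2).inv₀
      (fun y hy => pow_ne_zero 2 (h y hy)))

lemma key {x a' b' a'' b'' : ℝ} (hx : 0 < a'' - x) (hL : b'' - a'' ≤ a'' - x)
    (h2 : a'' ≤ a') (h3 : a' < b') (h4 : b' ≤ b'') :
    (x - b')⁻¹ - (x - a')⁻¹ ≤ 4 * ((b' - a') / (b'' - a'')) * ((x - b'')⁻¹ - (x - a'')⁻¹) := by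
  have hL0 : 0 < b'' - a'' := by linarith
  have hp : 0 < a' - x := by linarith
  have hq : 0 < b' - x := by linarith
  have hs : 0 < a'' - x := hx
  have ht : 0 < b'' - x := by linarith
  have hb'x : x - b' ≠ 0 := by intro h; nlinarith
  have ha'x : x - a' ≠ 0 := by intro h; nlinarith
  have hb''x : x - b'' ≠ 0 := by intro h; nlinarith
  have ha''x : x - a'' ≠ 0 := by intro h; nlinarith
  have e1 : (x - b')⁻¹ - (x - a')⁻¹ = (b' - a') / ((a' - x) * (b' - x)) := by
    field_simp
    ring
  have e2 : (x - b'')⁻¹ - (x - a'')⁻¹ = (b'' - a'') / ((a'' - x) * (b'' - x)) := by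
    field_simp
    ring
  rw [e1, e2]
  have e3 : 4 * ((b' - a') / (b'' - a'')) * ((b'' - a'') / ((a'' - x) * (b'' - x)))
      = (4 * (b' - a')) / ((a'' - x) * (b'' - x)) := by
    field_simp
  rw [e3, div_le_div_iff₀ (by positivity) (by positivity)]
  have h1 : b'' - x ≤ 2 * (a'' - x) := by linarith
  have hl : (0:ℝ) < b' - a' := by linarith
  have hsp : a'' - x ≤ a' - x := by linarith
  have hsq : a'' - x ≤ b' - x := by linarith
  nlinarith [mul_nonneg (mul_nonneg hl.le (sub_nonneg.2 h1)) hs.le,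
    mul_nonneg (mul_nonneg hl.le (sub_nonneg.2 hsp)) (sub_nonneg.2 hsq),
    mul_nonneg (mul_nonneg hl.le (sub_nonneg.2 hsp)) hs.le,
    mul_nonneg (mul_nonneg hl.le (sub_nonneg.2 hsq)) hs.le,
    mul_pos (mul_pos hl hp) hq]

lemma Jint_neg (a b c d : ℝ) : Jint a b c d = Jint (-b) (-a) (-d) (-c) := by
  unfold Jint
  rw [← intervalIntegral.integral_comp_neg (fun x => ∫ y in -d..-c, ((x - y) ^ 2)⁻¹)]
  apply intervalIntegral.integral_congr
  intro x _
  simp only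
  rw [← intervalIntegral.integral_comp_neg (fun y => ((-x - y) ^ 2)⁻¹)]
  apply intervalIntegral.integral_congr
  intro y _
  ring_nf

lemma main_left (a b a' b' a'' b'' : ℝ) (hI : a ≤ b) (hI' : a' < b')
    (h2 : a'' ≤ a') (h4 : b' ≤ b'') (hd : b'' - a'' ≤ a'' - b) :
    Jint a b a' b' ≤ 4 * ((b' - a') / (b'' - a'')) * Jint a b a'' b'' := by
  have hL : 0 < b'' - a'' := by linarith
  have hxb : ∀ x ∈ Set.uIcc a b, x < a'' := by
    intro x hx
    rw [Set.uIcc_of_le hI] at hx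
    linarith [hx.2]
  have e1 : Jint a b a' b' = ∫ x in a..b, ((x - b')⁻¹ - (x - a')⁻¹) := by
    apply intervalIntegral.integral_congr
    intro x hx
    apply inner_eval
    intro y hy
    rw [Set.uIcc_of_le hI'.le] at hy
    have := hxb x hx
    have := hy.1
    intro h; nlinarith
  have e2 : Jint a b a'' b'' = ∫ x in a..b, ((x - b'')⁻¹ - (x - a'')⁻¹) := by
    apply intervalIntegral.integral_congr
    intro x hx
    apply inner_eval
    intro y hy
    rw [Set.uIcc_of_le (by linarith : a'' ≤ b'')] at hy
    have := hxb x hx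
    have := hy.1
    intro h; nlinarith
  rw [e1, e2, ← intervalIntegral.integral_const_mul]
  have hcont : ∀ c : ℝ, a'' ≤ c → ContinuousOn (fun x : ℝ => (x - c)⁻¹) (Set.uIcc a b) := by
    intro c hc
    apply ContinuousOn.inv₀ (continuousOn_id.sub continuousOn_const)
    intro x hx
    have := hxb x hx
    intro h; simp only [Pi.sub_apply, id_eq] at h; nlinarith
  apply intervalIntegral.integral_mono_on hI
  · exact (((hcont b' (by linarith)).sub (hcont a' h2)).intervalIntegrable)
  · exact ((((hcont b'' (by linarith)).sub (hcont a'' le_rfl)).intervalIntegrable).const_mul _)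
  · intro x hx
    have hxa : x < a'' := hxb x (by rw [Set.uIcc_of_le hI]; exact hx)
    exact key (by linarith) (by linarith [hx.2]) h2 hI' h4

/-- If `I' ⊆ I''` are nondegenerate closed intervals and `dist(I, I'') ≥ |I''|`, then
`J(I, I') ≤ 4 (|I'|/|I''|) J(I, I'')`.  The distance hypothesis is expressed as a
disjunction over the two possible relative positions of `I` and `I''`. -/
theorem Jint_subinterval_bound (a b a' b' a'' b'' : ℝ)
    (hI : a ≤ b) (hI' : a' < b') (hI'' : a'' < b'')
    (hsub : a'' ≤ a' ∧ b' ≤ b'')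
    (hdist : b'' - a'' ≤ a'' - b ∨ b'' - a'' ≤ a - b'') :
    Jint a b a' b' ≤ 4 * ((b' - a') / (b'' - a'')) * Jint a b a'' b'' := by
  obtain ⟨h2, h4⟩ := hsub
  rcases hdist with hd | hd
  · exact main_left a b a' b' a'' b'' hI hI' h2 h4 hd
  · rw [Jint_neg a b a' b', Jint_neg a b a'' b'']
    have := main_left (-b) (-a) (-b') (-a') (-b'') (-a'') (by linarith) (by linarith)
      (by linarith) (by linarith) (by linarith)
    calc Jint (-b) (-a) (-b') (-a')
        ≤ 4 * ((-a' - -b') / (-a'' - -b'')) * Jint (-b) (-a) (-b'') (-a'') := this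
      _ = 4 * ((b' - a') / (b'' - a'')) * Jint (-b) (-a) (-b'') (-a'') := by ring_nf
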